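/- Let x > 1 be an irrational number with regular continued fraction expansion [a₀, a₁, a₂, ...] (all aᵢ positive integers), and suppose that for some n ≥ 1 we have a_{n+1} ≥ aₙ - 1 ≥ 1. Let p'/q' (in lowest terms, p', q' > 0) be the value of the finite continued fraction [a₀, a₁, ..., a_{n-1}, aₙ - 1]. Then |x - p'/q'| ≤ x/(p' q'). -/

import Mathlib

/-- Partial quotients of the regular continued fraction of `x`:
`cfa x 0 = ⌊x⌋`, and `cfa x (n+1)` are the partial quotients of `1/(x - ⌊x⌋)`. -/
noncomputable def cfa (x : ℝ) : ℕ → ℤ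
  | 0 => ⌊x⌋
  | n + 1 => cfa (x - ⌊x⌋)⁻¹ n

/-- The value of a finite regular continued fraction `[a₀, a₁, …, aₖ]`. -/
noncomputable def cfVal : List ℝ → ℝ
  | [] => 0
  | a :: l => if l = [] then a else a + (cfVal l)⁻¹

/-- The `n`-th regular continued fraction convergent of `x`, i.e. the value of
`[a₀, a₁, …, aₙ]` where the `aᵢ` are the partial quotients of `x`. -/
noncomputable def cfConv (x : ℝ) (n : ℕ) : ℝ :=
  cfVal ((List.range (n + 1)).map fun i => ((cfa x i : ℤ) : ℝ))

/-- The `n`-th complete quotient (tail) of `x`. -/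
noncomputable def cfT (x : ℝ) : ℕ → ℝ
  | 0 => x
  | n + 1 => cfT (x - ⌊x⌋)⁻¹ n

lemma cfa_eq_floor_cfT : ∀ (n : ℕ) (x : ℝ), cfa x n = ⌊cfT x n⌋ := by
  intro n
  induction n with
  | zero => intro x; rfl
  | succ n ih => intro x; exact ih ((x - ⌊x⌋)⁻¹)

lemma cfT_succ : ∀ (n : ℕ) (x : ℝ), cfT x (n + 1) = (cfT x n - ⌊cfT x n⌋)⁻¹ := by
  intro n
  induction n with
  | zero => intro x; rfl
  | succ n ih => intro x; exact ih ((x - ⌊x⌋)⁻¹)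

lemma cfT_irr_gt (x : ℝ) (hx : Irrational x) (hx1 : 1 < x) :
    ∀ n, Irrational (cfT x n) ∧ 1 < cfT x n := by
  intro n
  induction n with
  | zero => exact ⟨hx, hx1⟩
  | succ n ih =>
    obtain ⟨hirr, hgt⟩ := ih
    set y := cfT x n with hy
    have hfr : Irrational (y - ⌊y⌋) := hirr.sub_intCast _
    have hfr0 : 0 < y - ⌊y⌋ := by
      have h := Int.floor_le y
      rcases lt_or_eq_of_le h with h' | h'
      · linarith
      · exact absurd h'.symm (hirr.ne_int _)
    have hfr1 : y - ⌊y⌋ < 1 := by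
      have := Int.lt_floor_add_one y
      linarith
    rw [cfT_succ]
    constructor
    · exact hfr.inv
    · rw [lt_inv_comm₀ one_pos hfr0]
      simpa using hfr1

lemma cfVal_cons (a : ℝ) (l : List ℝ) (h : l ≠ []) :
    cfVal (a :: l) = a + (cfVal l)⁻¹ := by
  simp [cfVal, h]

lemma cfVal_singleton (a : ℝ) : cfVal [a] = a := by simp [cfVal]

lemma cfVal_replace_last (a s t : ℝ) (h : s = a + t⁻¹) :
    ∀ L : List ℝ, cfVal (L ++ [s]) = cfVal (L ++ [a, t]) := by
  intro L
  induction L with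
  | nil =>
    simp only [List.nil_append, cfVal_singleton]
    rw [cfVal_cons a [t] (by simp), cfVal_singleton, h]
  | cons b L ih =>
    rw [List.cons_append, List.cons_append,
      cfVal_cons b (L ++ [s]) (by simp), cfVal_cons b (L ++ [a, t]) (by simp), ih]

lemma cfT_rec (x : ℝ) (hx : Irrational x) (hx1 : 1 < x) (n : ℕ) :
    cfT x n = (cfa x n : ℝ) + (cfT x (n + 1))⁻¹ := by
  obtain ⟨hirr, hgt⟩ := cfT_irr_gt x hx hx1 n
  have h0 : cfT x n - ⌊cfT x n⌋ ≠ 0 := sub_ne_zero_of_ne (hirr.ne_int _)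
  rw [cfa_eq_floor_cfT, cfT_succ, inv_inv]
  ring

lemma x_eq_cfVal (x : ℝ) (hx : Irrational x) (hx1 : 1 < x) :
    ∀ k, x = cfVal (((List.range k).map fun i => ((cfa x i : ℤ) : ℝ)) ++ [cfT x k]) := by
  intro k
  induction k with
  | zero => simp [cfVal, cfT]
  | succ k ih =>
    rw [List.range_succ, List.map_append]
    have : ((List.range k).map fun i => ((cfa x i : ℤ) : ℝ)) ++
        ([k].map fun i => ((cfa x i : ℤ) : ℝ)) ++ [cfT x (k + 1)]
        = ((List.range k).map fun i => ((cfa x i : ℤ) : ℝ)) ++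
          [((cfa x k : ℤ) : ℝ), cfT x (k + 1)] := by
      simp
    rw [this, ← cfVal_replace_last ((cfa x k : ℤ) : ℝ) (cfT x k) (cfT x (k + 1))
      (cfT_rec x hx hx1 k)]
    exact ih

lemma mobius : ∀ (L : List ℤ), L ≠ [] → (∀ a ∈ L, 1 ≤ a) →
    ∃ P₁ P₂ Q₁ Q₂ : ℤ, 1 ≤ P₂ ∧ P₂ ≤ P₁ ∧ 0 ≤ Q₂ ∧ Q₂ ≤ Q₁ ∧ 1 ≤ Q₁ ∧
      (P₁ * Q₂ - P₂ * Q₁ = 1 ∨ P₁ * Q₂ - P₂ * Q₁ = -1) ∧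
      ∀ t : ℝ, 0 < t →
        cfVal ((L.map fun a => ((a : ℤ) : ℝ)) ++ [t]) =
          ((P₁ : ℝ) * t + (P₂ : ℝ)) / ((Q₁ : ℝ) * t + (Q₂ : ℝ)) := by
  intro L
  induction L with
  | nil => intro h; exact absurd rfl h
  | cons a L ih =>
    intro _ hmem
    have ha : 1 ≤ a := hmem a (by simp)
    cases L with
    | nil =>
      refine ⟨a, 1, 1, 0, le_refl 1, ha, le_refl 0, zero_le_one, le_refl 1, Or.inr (by ring), ?_⟩
      intro t ht
      have hl : ([a].map fun a => ((a : ℤ) : ℝ)) ++ [t] = [((a : ℤ) : ℝ), t] := by simp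
      rw [hl, cfVal_cons _ [t] (by simp), cfVal_singleton]
      push_cast
      rw [one_mul, add_zero]
      field_simp
    | cons b L' =>
      obtain ⟨P₁, P₂, Q₁, Q₂, h1, h2, h3, h4, h5, hdet, hval⟩ :=
        ih (by simp) (fun c hc => hmem c (List.mem_cons_of_mem a hc))
      refine ⟨a * P₁ + Q₁, a * P₂ + Q₂, P₁, P₂, ?_, ?_, by linarith, h2, by linarith, ?_, ?_⟩
      · nlinarith
      · nlinarith
      · rcases hdet with h | h
        · right; nlinarith [h]
        · left; nlinarith [h]
      · intro t ht
        have hne : ((b :: L').map fun a => ((a : ℤ) : ℝ)) ++ [t] ≠ [] := by simp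
        have hlist : (((a :: b :: L').map fun a => ((a : ℤ) : ℝ)) ++ [t]) =
            ((a : ℤ) : ℝ) :: (((b :: L').map fun a => ((a : ℤ) : ℝ)) ++ [t]) := by simp
        rw [hlist, cfVal_cons _ _ hne, hval t ht]
        have hP : (0 : ℝ) < (P₁ : ℝ) * t + (P₂ : ℝ) := by
          have h2' : (1 : ℝ) ≤ (P₂ : ℝ) := by exact_mod_cast h1
          have h1' : (1 : ℝ) ≤ (P₁ : ℝ) := by exact_mod_cast h1.trans h2
          nlinarith
        have hQ : (0 : ℝ) < (Q₁ : ℝ) * t + (Q₂ : ℝ) := by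
          have h5' : (1 : ℝ) ≤ (Q₁ : ℝ) := by exact_mod_cast h5
          have h3' : (0 : ℝ) ≤ (Q₂ : ℝ) := by exact_mod_cast h3
          nlinarith
        rw [inv_div]
        push_cast
        have hP' : (P₁ : ℝ) * t + (P₂ : ℝ) ≠ 0 := ne_of_gt hP
        field_simp
        rw [eq_div_iff (by linarith), add_mul, div_mul_cancel₀ _ (by linarith)]
        ring

lemma fraction_eq (p' q' A B : ℤ) (hp' : 0 < p') (hq' : 0 < q') (hA : 0 < A) (hB : 0 < B)
    (hcop : IsCoprime p' q') (hcop2 : IsCoprime A B)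
    (h : (p' : ℝ) / q' = (A : ℝ) / B) : p' = A ∧ q' = B := by
  have hq0 : (q' : ℝ) ≠ 0 := ne_of_gt (by exact_mod_cast hq')
  have hB0 : (B : ℝ) ≠ 0 := ne_of_gt (by exact_mod_cast hB)
  have hZ : p' * B = A * q' := by
    rw [div_eq_div_iff hq0 hB0] at h
    exact_mod_cast h
  have hdvd1 : p' ∣ A := by
    have : p' ∣ q' * A := ⟨B, by linarith [hZ]⟩
    exact hcop.dvd_of_dvd_mul_left this
  have hdvd2 : A ∣ p' := by
    have : A ∣ B * p' := ⟨q', by linarith [hZ]⟩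
    exact hcop2.dvd_of_dvd_mul_left this
  have hpA : p' = A := Int.dvd_antisymm (le_of_lt hp') (le_of_lt hA) hdvd1 hdvd2
  refine ⟨hpA, ?_⟩
  have h2 : A * q' = A * B := by rw [← hZ, hpA]
  exact mul_left_cancel₀ (ne_of_gt hA) h2

set_option maxHeartbeats 1000000 in
theorem stmt_9 (x : ℝ) (hx : Irrational x) (hx1 : 1 < x) (n : ℕ) (hn : 1 ≤ n)
    (h1 : cfa x (n + 1) ≥ cfa x n - 1) (h2 : cfa x n - 1 ≥ 1)
    (p' q' : ℤ) (hp' : 0 < p') (hq' : 0 < q') (hcop : Int.gcd p' q' = 1)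
    (hval : (p' : ℝ) / q' =
      cfVal (((List.range n).map fun i => ((cfa x i : ℤ) : ℝ)) ++ [((cfa x n - 1 : ℤ) : ℝ)])) :
    |x - (p' : ℝ) / q'| ≤ x / ((p' : ℝ) * q') := by
  have hquot : ∀ i, Irrational (cfT x i) ∧ 1 < cfT x i := cfT_irr_gt x hx hx1
  have hage : ∀ i, 1 ≤ cfa x i := by
    intro i
    rw [cfa_eq_floor_cfT]
    exact Int.le_floor.2 (by exact_mod_cast (hquot i).2.le)
  set L : List ℤ := (List.range n).map (cfa x) with hL
  clear_value L
  have hLne : L ≠ [] := by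
    rw [hL]
    simp only [ne_eq, List.map_eq_nil_iff, List.range_eq_nil]
    omega
  have hLmem : ∀ a ∈ L, 1 ≤ a := by
    intro a haL
    rw [hL] at haL
    simp only [List.mem_map, List.mem_range] at haL
    obtain ⟨i, _, rfl⟩ := haL
    exact hage i
  obtain ⟨P₁, P₂, Q₁, Q₂, hP2, hP12, hQ2, hQ12, hQ1, hdet, hmob⟩ := mobius L hLne hLmem
  have hmap : (L.map fun a => ((a : ℤ) : ℝ)) = (List.range n).map fun i => ((cfa x i : ℤ) : ℝ) := by
    rw [hL, List.map_map]; rfl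
  set c : ℤ := cfa x n - 1 with hc
  clear_value c
  set y : ℝ := cfT x n with hy
  clear_value y
  set y1 : ℝ := cfT x (n + 1) with hy1
  clear_value y1
  have hy1gt : 1 < y1 := by rw [hy1]; exact (hquot (n + 1)).2
  have hygt : 1 < y := by rw [hy]; exact (hquot n).2
  have hy1pos : (0 : ℝ) < y1 := by linarith
  have hy1c : (c : ℝ) < y1 := by
    rw [hy1]
    have hfl : ⌊cfT x (n + 1)⌋ = cfa x (n + 1) := (cfa_eq_floor_cfT (n + 1) x).symm
    have hlt : (⌊cfT x (n + 1)⌋ : ℝ) < cfT x (n + 1) :=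
      lt_of_le_of_ne (Int.floor_le _) (Ne.symm ((hquot (n + 1)).1.ne_int _))
    have hcc : (c : ℝ) ≤ (⌊cfT x (n + 1)⌋ : ℝ) := by
      rw [hfl]; exact_mod_cast h1
    linarith
  have hyrec : y = (cfa x n : ℝ) + y1⁻¹ := by
    rw [hy, hy1]; exact cfT_rec x hx hx1 n
  set t : ℝ := 1 + y1⁻¹ with ht
  clear_value t
  have hyct : y = (c : ℝ) + t := by
    rw [hyrec, ht, hc]; push_cast; ring
  have ht1 : 1 < t := by
    have h := inv_pos.mpr hy1pos
    rw [ht]; linarith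
  have hc1R : (1 : ℝ) ≤ (c : ℝ) := by exact_mod_cast h2
  have hxval : x = ((P₁ : ℝ) * y + P₂) / ((Q₁ : ℝ) * y + Q₂) := by
    have hx0 := x_eq_cfVal x hx hx1 n
    rw [← hmap, hmob (cfT x n) (by linarith [(hquot n).2])] at hx0
    rw [hy]; exact hx0
  have hpq : (p' : ℝ) / q' = ((P₁ : ℝ) * c + P₂) / ((Q₁ : ℝ) * c + Q₂) := by
    rw [hval, ← hmap, hmob (c : ℝ) (by linarith)]
  set A : ℤ := P₁ * c + P₂ with hA
  clear_value A
  set B : ℤ := Q₁ * c + Q₂ with hB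
  clear_value B
  have hP1 : 1 ≤ P₁ := hP2.trans hP12
  have hApos : 0 < A := by
    rw [hA]
    nlinarith [mul_pos (show (0:ℤ) < P₁ by linarith) (show (0:ℤ) < c by linarith)]
  have hBpos : 0 < B := by
    rw [hB]
    nlinarith [mul_pos (show (0:ℤ) < Q₁ by linarith) (show (0:ℤ) < c by linarith)]
  have hcopAB : IsCoprime A B := by
    rcases hdet with h | h
    · exact ⟨-Q₁, P₁, by rw [hA, hB]; linear_combination h⟩
    · exact ⟨Q₁, -P₁, by rw [hA, hB]; linear_combination -h⟩
  have hABeq : p' = A ∧ q' = B := by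
    apply fraction_eq p' q' A B hp' hq' hApos hBpos
      (Int.isCoprime_iff_gcd_eq_one.mpr hcop) hcopAB
    rw [hpq, hA, hB]; push_cast; ring
  obtain ⟨hpA, hqB⟩ := hABeq
  have hAr : (0 : ℝ) < (A : ℝ) := by exact_mod_cast hApos
  have hBr : (0 : ℝ) < (B : ℝ) := by exact_mod_cast hBpos
  set D : ℝ := (Q₁ : ℝ) * y + Q₂ with hD
  clear_value D
  have hQ1r : (1 : ℝ) ≤ (Q₁ : ℝ) := by exact_mod_cast hQ1
  have hP1r : (1 : ℝ) ≤ (P₁ : ℝ) := by exact_mod_cast hP1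
  have hP2r : (1 : ℝ) ≤ (P₂ : ℝ) := by exact_mod_cast hP2
  have hP12r : (P₂ : ℝ) ≤ (P₁ : ℝ) := by exact_mod_cast hP12
  have hDB : D = (B : ℝ) + (Q₁ : ℝ) * t := by
    rw [hD, hB, hyct]; push_cast; ring
  have hDpos : (0 : ℝ) < D := by
    rw [hDB]
    nlinarith [mul_pos (show (0:ℝ) < (Q₁:ℝ) by linarith) (show (0:ℝ) < t by linarith)]
  have hNum : (P₁ : ℝ) * y + P₂ = (A : ℝ) + (P₁ : ℝ) * t := by
    rw [hA, hyct]; push_cast; ring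
  have hxABt : x = ((A : ℝ) + (P₁ : ℝ) * t) / D := by rw [hxval, hNum, hD]
  have hdiffabs : |x - (A : ℝ) / B| = t / (D * B) := by
    have hdr : x - (A : ℝ) / B = ((P₁ : ℝ) * B - (A : ℝ) * Q₁) * t / (D * B) := by
      have hD0 : D ≠ 0 := ne_of_gt hDpos
      have hD0' : (B : ℝ) + (Q₁ : ℝ) * t ≠ 0 := hDB ▸ hD0
      have hB0 : (B : ℝ) ≠ 0 := ne_of_gt hBr
      rw [hxABt, hDB]
      field_simp
      ring
    have hdetR : (P₁ : ℝ) * B - (A : ℝ) * Q₁ = ((P₁ * Q₂ - P₂ * Q₁ : ℤ) : ℝ) := by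
      rw [hA, hB]; push_cast; ring
    have htDB : (0 : ℝ) ≤ t / (D * B) :=
      div_nonneg (by linarith) (le_of_lt (mul_pos hDpos hBr))
    rcases hdet with h | h
    · rw [hdr, hdetR, h]
      push_cast
      rw [one_mul]
      exact abs_of_nonneg htDB
    · rw [hdr, hdetR, h]
      push_cast
      rw [show (-1 : ℝ) * t / (D * B) = -(t / (D * B)) by ring, abs_neg]
      exact abs_of_nonneg htDB
  have hkey : t * (A : ℝ) ≤ (A : ℝ) + (P₁ : ℝ) * t := by
    have hAc : (A : ℝ) = (P₁ : ℝ) * c + (P₂ : ℝ) := by rw [hA]; push_cast; ring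
    have hAle : (A : ℝ) ≤ (P₁ : ℝ) * (y1 + 1) := by
      nlinarith [mul_pos (show (0:ℝ) < (P₁:ℝ) by linarith) (show (0:ℝ) < y1 - c by linarith)]
    have hy1ne : y1 ≠ 0 := ne_of_gt hy1pos
    have htm1 : t - 1 = y1⁻¹ := by rw [ht]; ring
    have hstep : (t - 1) * (A : ℝ) ≤ (P₁ : ℝ) * t := by
      have hPt : (P₁ : ℝ) * t = (P₁ : ℝ) * (y1 + 1) * y1⁻¹ := by
        rw [ht]; field_simp
      rw [htm1, hPt]
      have := mul_le_mul_of_nonneg_right hAle (le_of_lt (inv_pos.mpr hy1pos))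
      linarith [this]
    linarith
  rw [hpA, hqB, hdiffabs, hxABt]
  rw [div_div, div_le_div_iff₀ (mul_pos hDpos hBr) (mul_pos hDpos (mul_pos hAr hBr))]
  calc t * (D * ((A : ℝ) * B)) = (t * (A : ℝ)) * (D * B) := by ring
    _ ≤ ((A : ℝ) + (P₁ : ℝ) * t) * (D * B) :=
        mul_le_mul_of_nonneg_right hkey (le_of_lt (mul_pos hDpos hBr))
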